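/- The group of all semiring automorphisms of the tropical semifield T (under composition) is isomorphic to the multiplicative group of positive real numbers; an isomorphism sends each r > 0 to the r-expansive map of T (the map fixing −∞ and sending each real t to r·t). -/

import Mathlib

/-- The tropical semifield `T = ℝ ∪ {-∞}` is modeled as `WithBot ℝ`, whose `max` is
tropical addition `⊕`, whose `+` (with `⊥` absorbing) is tropical multiplication `⊙`,
whose `⊥ = -∞` is the additive neutral element, and whose `(0 : ℝ)` is the
multiplicative identity.  `IsTropHom ψ` says `ψ` is a semiring homomorphism of `T`. -/
def IsTropHom (ψ : WithBot ℝ → WithBot ℝ) : Prop :=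
  (∀ a b : WithBot ℝ, ψ (max a b) = max (ψ a) (ψ b)) ∧
  (∀ a b : WithBot ℝ, ψ (a + b) = ψ a + ψ b) ∧
  ψ ⊥ = ⊥ ∧ ψ ((0 : ℝ) : WithBot ℝ) = ((0 : ℝ) : WithBot ℝ)

lemma additive_monotone_linear (f : ℝ →+ ℝ) (hf : Monotone f) (t : ℝ) : f t = f 1 * t := by
  have hq : ∀ q : ℚ, f (q : ℝ) = f 1 * (q : ℝ) := by
    intro q
    have h := map_ratCast_smul f ℝ ℝ q (1 : ℝ)
    simpa [smul_eq_mul, mul_comm] using h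
  have h0 : (0 : ℝ) ≤ f 1 := by simpa using hf (by norm_num : (0:ℝ) ≤ 1)
  rcases eq_or_lt_of_le h0 with h1 | h1
  · obtain ⟨q, hq1⟩ := exists_rat_gt t
    obtain ⟨p, hp1⟩ := exists_rat_lt t
    have hu : f t ≤ 0 := by
      have := hf hq1.le
      rw [hq q, ← h1] at this
      simpa using this
    have hl : (0:ℝ) ≤ f t := by
      have := hf hp1.le
      rw [hq p, ← h1] at this
      simpa using this
    rw [← h1]
    linarith
  · have hu : f t ≤ f 1 * t := by
      have : f t / f 1 ≤ t := by
        refine le_of_forall_lt_rat_imp_le fun q hq1 => ?_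
        have := hf hq1.le
        rw [hq q] at this
        rw [div_le_iff₀ h1]
        linarith [this]
      calc f t = f t / f 1 * f 1 := by field_simp
        _ ≤ t * f 1 := by nlinarith
        _ = f 1 * t := mul_comm _ _
    have hl : f 1 * t ≤ f t := by
      have : t ≤ f t / f 1 := by
        refine le_of_forall_rat_lt_imp_le fun q hq1 => ?_
        have := hf hq1.le
        rw [hq q] at this
        rw [le_div_iff₀ h1]
        linarith [this]
      calc f 1 * t = t * f 1 := mul_comm _ _
        _ ≤ f t / f 1 * f 1 := by nlinarith
        _ = f t := by field_simp
    linarith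

/-- The r-expansion permutation of WithBot ℝ. -/
noncomputable def expMap (r : ℝ) (hr : 0 < r) : Equiv.Perm (WithBot ℝ) where
  toFun x := x.map (fun t : ℝ => r * t)
  invFun x := x.map (fun t : ℝ => r⁻¹ * t)
  left_inv x := by
    induction x using WithBot.recBotCoe with
    | bot => rfl
    | coe a =>
      simp only [WithBot.map_coe, WithBot.coe_inj]
      field_simp
  right_inv x := by
    induction x using WithBot.recBotCoe with
    | bot => rfl
    | coe a =>
      simp only [WithBot.map_coe, WithBot.coe_inj]
      field_simp

lemma expMap_isTropHom (r : ℝ) (hr : 0 < r) : IsTropHom (expMap r hr) := by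
  refine ⟨fun a b => ?_, fun a b => ?_, rfl, ?_⟩
  · induction a using WithBot.recBotCoe with
    | bot => simp [expMap]
    | coe a =>
      induction b using WithBot.recBotCoe with
      | bot => simp [expMap]
      | coe b =>
        show (expMap r hr) ((max a b : ℝ) : WithBot ℝ) = _
        simp only [expMap, Equiv.coe_fn_mk, WithBot.map_coe]
        rw [← WithBot.coe_max, WithBot.coe_inj]
        rcases le_total a b with h | h
        · rw [max_eq_right h, max_eq_right (by nlinarith)]
        · rw [max_eq_left h, max_eq_left (by nlinarith)]
  · induction a using WithBot.recBotCoe with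
    | bot => simp [expMap]
    | coe a =>
      induction b using WithBot.recBotCoe with
      | bot => simp [expMap]
      | coe b =>
        show (expMap r hr) ((a + b : ℝ) : WithBot ℝ) = _
        simp only [expMap, Equiv.coe_fn_mk, WithBot.map_coe, ← WithBot.coe_add]
        rw [WithBot.coe_inj]; ring
  · show ((0:ℝ) : WithBot ℝ).map _ = _
    simp [WithBot.map_coe]

def tropG : Subgroup (Equiv.Perm (WithBot ℝ)) where
  carrier := {ψ | IsTropHom ψ}
  one_mem' := ⟨fun _ _ => rfl, fun _ _ => rfl, rfl, rfl⟩
  mul_mem' := by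
    rintro a b ⟨ha1, ha2, ha3, ha4⟩ ⟨hb1, hb2, hb3, hb4⟩
    refine ⟨fun x y => ?_, fun x y => ?_, ?_, ?_⟩
    · simp only [Equiv.Perm.coe_mul, Function.comp_apply, hb1, ha1]
    · simp only [Equiv.Perm.coe_mul, Function.comp_apply, hb2, ha2]
    · simp only [Equiv.Perm.coe_mul, Function.comp_apply, hb3, ha3]
    · simp only [Equiv.Perm.coe_mul, Function.comp_apply, hb4, ha4]
  inv_mem' := by
    rintro a ⟨ha1, ha2, ha3, ha4⟩
    refine ⟨fun x y => ?_, fun x y => ?_, ?_, ?_⟩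
    · apply a.injective
      rw [Equiv.Perm.coe_inv, Equiv.apply_symm_apply, ha1, Equiv.apply_symm_apply,
        Equiv.apply_symm_apply]
    · apply a.injective
      rw [Equiv.Perm.coe_inv, Equiv.apply_symm_apply, ha2, Equiv.apply_symm_apply,
        Equiv.apply_symm_apply]
    · apply a.injective
      rw [Equiv.Perm.coe_inv, Equiv.apply_symm_apply, ha3]
    · apply a.injective
      rw [Equiv.Perm.coe_inv, Equiv.apply_symm_apply, ha4]

lemma tropHom_eq_expMap (ψ : Equiv.Perm (WithBot ℝ)) (h : IsTropHom ψ) :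
    ∃ (r : ℝ) (hr : 0 < r), ψ = expMap r hr := by
  obtain ⟨h1, h2, h3, h4⟩ := h
  have hreal : ∀ t : ℝ, ∃ s : ℝ, ψ (t : WithBot ℝ) = (s : WithBot ℝ) := by
    intro t
    have hne : ψ (t : WithBot ℝ) ≠ ⊥ := by
      intro hc
      have := ψ.injective (hc.trans h3.symm)
      exact (WithBot.coe_ne_bot) this
    rcases WithBot.ne_bot_iff_exists.mp hne with ⟨s, hs⟩
    exact ⟨s, hs.symm⟩
  choose f hf using hreal
  have hadd : ∀ a b : ℝ, f (a + b) = f a + f b := by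
    intro a b
    have := h2 (a : WithBot ℝ) (b : WithBot ℝ)
    rw [← WithBot.coe_add, hf (a+b), hf a, hf b, ← WithBot.coe_add] at this
    exact_mod_cast this
  have hzero : f 0 = 0 := by
    have := h4
    rw [hf 0] at this
    exact_mod_cast this
  have hmono : Monotone f := by
    intro a b hab
    have := h1 (a : WithBot ℝ) (b : WithBot ℝ)
    rw [max_eq_right (by exact_mod_cast hab : (a : WithBot ℝ) ≤ b), hf b, hf a] at this
    have h' : (f a : WithBot ℝ) ≤ (f b : WithBot ℝ) := by
      rw [this]; exact le_max_left _ _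
    exact_mod_cast h'
  have hinj : Function.Injective f := by
    intro a b hab
    have : ψ (a : WithBot ℝ) = ψ (b : WithBot ℝ) := by rw [hf a, hf b]; exact_mod_cast hab
    exact_mod_cast ψ.injective this
  set F : ℝ →+ ℝ := AddMonoidHom.mk' f hadd with hF
  have hlin : ∀ t : ℝ, f t = f 1 * t := fun t => additive_monotone_linear F hmono t
  have hr : 0 < f 1 := by
    have h01 : f 0 ≤ f 1 := hmono (by norm_num)
    rcases lt_or_eq_of_le h01 with h' | h'
    · rwa [hzero] at h'
    · exact absurd (hinj h') (by norm_num)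
  refine ⟨f 1, hr, ?_⟩
  ext x
  induction x using WithBot.recBotCoe with
  | bot => exact h3
  | coe t =>
    show ψ _ = ((t : WithBot ℝ)).map _
    rw [hf t, WithBot.map_coe, hlin t]

noncomputable def tropPhi : {r : ℝ // 0 < r} →* tropG where
  toFun r := ⟨expMap r.1 r.2, expMap_isTropHom r.1 r.2⟩
  map_one' := by
    ext x
    induction x using WithBot.recBotCoe with
    | bot => rfl
    | coe t => simp [expMap, WithBot.map_coe]
  map_mul' r s := by
    ext x
    induction x using WithBot.recBotCoe with
    | bot => rfl
    | coe t =>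
      show ((t : WithBot ℝ)).map _ = (expMap r.1 r.2) (((t : WithBot ℝ)).map _)
      simp only [WithBot.map_coe]
      show _ = ((((s.1 * t : ℝ)) : WithBot ℝ)).map _
      simp only [WithBot.map_coe, WithBot.coe_inj]
      show (r * s).1 * t = r.1 * (s.1 * t)
      rw [Positive.val_mul]; ring

/-- The semiring automorphisms of the tropical semifield `T` form a group under
composition (a subgroup `G` of the permutation group of `T`), and this group is
isomorphic to the multiplicative group of positive reals, an isomorphism sending
each `r > 0` to the `r`-expansive map of `T` (fixing `-∞`, sending real `t` to `r*t`). -/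
theorem tropAut_group_iso_posReal :
    ∃ G : Subgroup (Equiv.Perm (WithBot ℝ)),
      (∀ ψ : Equiv.Perm (WithBot ℝ), ψ ∈ G ↔ IsTropHom ψ) ∧
      ∃ e : {r : ℝ // 0 < r} ≃* G,
        ∀ (r : {r : ℝ // 0 < r}) (x : WithBot ℝ),
          ((e r : Equiv.Perm (WithBot ℝ)) x) = x.map (fun t : ℝ => r.1 * t) := by
  refine ⟨tropG, fun ψ => Iff.rfl, ?_⟩
  have hbij : Function.Bijective tropPhi := by
    constructor
    · intro r s hrs
      have : (tropPhi r : Equiv.Perm (WithBot ℝ)) ((1:ℝ) : WithBot ℝ)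
          = (tropPhi s : Equiv.Perm (WithBot ℝ)) ((1:ℝ) : WithBot ℝ) := by rw [hrs]
      simp only [tropPhi, expMap, MonoidHom.coe_mk, OneHom.coe_mk, Equiv.coe_fn_mk,
        WithBot.map_coe, WithBot.coe_inj, mul_one] at this
      exact Subtype.ext this
    · rintro ⟨ψ, hψ⟩
      obtain ⟨r, hr, rfl⟩ := tropHom_eq_expMap ψ hψ
      exact ⟨⟨r, hr⟩, rfl⟩
  refine ⟨MulEquiv.ofBijective tropPhi hbij, fun r x => ?_⟩
  rfl
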